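/- arXiv:2006.13387 — 3 statements merged into one kernel-verified Lean document; each statement's English description precedes it below -/
import Mathlib

section
/- For a symmetric positive definite block matrix K = [[K_xx, K_xy],[K_xy^T, K_yy]] and its block-diagonal part C = [[K_xx, 0],[0, K_yy]], the generalized eigenvalues of the pencil (K, C) all lie in the interval (0, 2), and hence the spectral condition number of C^{-1}K is at most 2/λ_min where λ_min is the smallest generalized eigenvalue. -/
open Matrix

/-- For a symmetric positive definite block matrix `K = [[Kxx, Kxy],[Kxyᵀ, Kyy]]` and its
block-diagonal part `C = [[Kxx, 0],[0, Kyy]]`, all generalized eigenvalues of the pencil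
`(K, C)` lie in `(0, 2)`, and hence the spectral condition number of `C⁻¹K` is at most
`2 / λ_min`. -/
theorem stmt0 (n : ℕ) (Kxx Kxy Kyy : Matrix (Fin n) (Fin n) ℝ)
    (K C : Matrix (Fin n ⊕ Fin n) (Fin n ⊕ Fin n) ℝ)
    (hK : K = Matrix.fromBlocks Kxx Kxy Kxyᵀ Kyy)
    (hC : C = Matrix.fromBlocks Kxx 0 0 Kyy)
    (hKpd : K.PosDef) (hxx : Kxx.PosDef) (hyy : Kyy.PosDef) :
    (∀ (lam : ℝ) (v : Fin n ⊕ Fin n → ℝ), v ≠ 0 →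
        K.mulVec v = lam • C.mulVec v → 0 < lam ∧ lam < 2) ∧
    (∀ lammin lammax : ℝ,
      ((∃ v : Fin n ⊕ Fin n → ℝ, v ≠ 0 ∧ K.mulVec v = lammin • C.mulVec v) ∧
        (∀ (lam : ℝ) (v : Fin n ⊕ Fin n → ℝ), v ≠ 0 →
          K.mulVec v = lam • C.mulVec v → lammin ≤ lam)) →
      (∃ v : Fin n ⊕ Fin n → ℝ, v ≠ 0 ∧ K.mulVec v = lammax • C.mulVec v) →
      lammax / lammin ≤ 2 / lammin) := by
  have key : ∀ (lam : ℝ) (v : Fin n ⊕ Fin n → ℝ), v ≠ 0 →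
      K.mulVec v = lam • C.mulVec v → 0 < lam ∧ lam < 2 := by
    intro lam v hvne hv
    set x : Fin n → ℝ := v ∘ Sum.inl with hx
    set y : Fin n → ℝ := v ∘ Sum.inr with hy
    have hvelim : v = Sum.elim x y := (Sum.elim_comp_inl_inr v).symm
    -- abbreviations for quadratic form pieces
    set a : ℝ := x ⬝ᵥ Kxx *ᵥ x with ha
    set b : ℝ := x ⬝ᵥ Kxy *ᵥ y with hb
    set d : ℝ := y ⬝ᵥ Kyy *ᵥ y with hd
    have hsym : y ⬝ᵥ Kxyᵀ *ᵥ x = b := by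
      rw [hb, dotProduct_mulVec y Kxyᵀ x, vecMul_transpose, dotProduct_comm]
    have hKquad : v ⬝ᵥ K *ᵥ v = a + b + b + d := by
      rw [hK, hvelim, fromBlocks_mulVec, sumElim_dotProduct_sumElim]
      simp only [Sum.elim_comp_inl, Sum.elim_comp_inr]
      rw [dotProduct_add, dotProduct_add, hsym]
      ring
    have hCquad : v ⬝ᵥ C *ᵥ v = a + d := by
      rw [hC, hvelim, fromBlocks_mulVec, sumElim_dotProduct_sumElim]
      simp only [Sum.elim_comp_inl, Sum.elim_comp_inr]
      simp [dotProduct_add]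
      rfl
    have hkpos : 0 < a + b + b + d := by
      rw [← hKquad]
      simpa using hKpd.dotProduct_mulVec_pos hvne
    have hxy0 : x ≠ 0 ∨ y ≠ 0 := by
      by_contra h
      push_neg at h
      apply hvne
      rw [hvelim, h.1, h.2]
      funext i; cases i <;> rfl
    have hanneg : 0 ≤ a := by simpa using hxx.posSemidef.dotProduct_mulVec_nonneg x
    have hdnneg : 0 ≤ d := by simpa using hyy.posSemidef.dotProduct_mulVec_nonneg y
    have hcpos : 0 < a + d := by
      rcases hxy0 with hx0 | hy0
      · have : 0 < a := by simpa using hxx.dotProduct_mulVec_pos hx0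
        linarith
      · have : 0 < d := by simpa using hyy.dotProduct_mulVec_pos hy0
        linarith
    have hkeq : a + b + b + d = lam * (a + d) := by
      have := congrArg (fun w => v ⬝ᵥ w) hv
      simpa [hKquad, hCquad, dotProduct_smul, smul_eq_mul] using this
    -- the flipped vector
    have hwquad : 0 < a - b - b + d := by
      set w : Fin n ⊕ Fin n → ℝ := Sum.elim x (-y) with hw
      have hwne : w ≠ 0 := by
        rcases hxy0 with hx0 | hy0
        · intro h0
          exact hx0 (funext fun i => congrFun h0 (Sum.inl i))
        · intro h0
          exact hy0 (neg_eq_zero.mp (funext fun i => congrFun h0 (Sum.inr i)))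
      have hpos := hKpd.dotProduct_mulVec_pos hwne
      have hq : w ⬝ᵥ K *ᵥ w = a - b - b + d := by
        rw [hK, hw, fromBlocks_mulVec, sumElim_dotProduct_sumElim]
        simp only [Sum.elim_comp_inl, Sum.elim_comp_inr]
        rw [dotProduct_add, dotProduct_add]
        have h2 : (-y) ⬝ᵥ Kxyᵀ *ᵥ x = -b := by
          rw [neg_dotProduct, hsym]
        rw [h2]
        simp only [mulVec_neg, dotProduct_neg, neg_dotProduct, neg_neg]
        ring
      rw [← hq]
      simpa using hpos
    constructor
    · nlinarith
    · nlinarith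
  refine ⟨key, ?_⟩
  rintro lammin lammax ⟨⟨v, hvne, hv⟩, -⟩ ⟨w, hwne, hw⟩
  have h1 := key lammin v hvne hv
  have h2 := key lammax w hwne hw
  have := h1.1
  gcongr
  exact h2.2.le
end

section
/- For the additive Schwarz operator P = Σ_{i=0}^N R_iᵀ(R_i A R_iᵀ)⁻¹R_i A with A symmetric positive definite, the largest eigenvalue of P is at most N+1. -/
open Matrix

section aux

lemma aux_sum_mulVec {ι : Type*} {n : ℕ} (s : Finset ι)
    (f : ι → Matrix (Fin n) (Fin n) ℝ) (w : Fin n → ℝ) :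
    (∑ i ∈ s, f i) *ᵥ w = ∑ i ∈ s, f i *ᵥ w := by
  ext j
  simp only [Matrix.mulVec, dotProduct, Matrix.sum_apply, Finset.sum_apply, Finset.sum_mul]
  rw [Finset.sum_comm]

lemma aux_dotProduct_sum {ι : Type*} {n : ℕ} (s : Finset ι)
    (v : Fin n → ℝ) (g : ι → (Fin n → ℝ)) :
    v ⬝ᵥ (∑ i ∈ s, g i) = ∑ i ∈ s, v ⬝ᵥ g i := by
  simp only [dotProduct, Finset.sum_apply, Finset.mul_sum]
  rw [Finset.sum_comm]

/-- `R A Rᵀ` is positive definite when `A` is and `R` has full row rank. -/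
lemma aux_posDef_RAR {k n : ℕ} (A : Matrix (Fin n) (Fin n) ℝ) (hA : A.PosDef)
    (R : Matrix (Fin k) (Fin n) ℝ) (hR : Function.Surjective R.mulVec) :
    (R * A * Rᵀ).PosDef := by
  have hAt : Aᵀ = A := by
    rw [← conjTranspose_eq_transpose_of_trivial]; exact hA.isHermitian
  have hherm : (R * A * Rᵀ).IsHermitian := by
    show (R * A * Rᵀ)ᴴ = R * A * Rᵀ
    simp [conjTranspose_eq_transpose_of_trivial, transpose_mul, hAt, Matrix.mul_assoc]
  refine Matrix.PosDef.of_dotProduct_mulVec_pos hherm fun x hx => ?_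
  have hRx : Rᵀ *ᵥ x ≠ 0 := by
    intro h0
    apply hx
    rw [← dotProduct_self_eq_zero (v := x)]
    obtain ⟨w, hw⟩ := hR x
    calc x ⬝ᵥ x = x ⬝ᵥ (R *ᵥ w) := by rw [hw]
      _ = (Rᵀ *ᵥ x) ⬝ᵥ w := by rw [dotProduct_mulVec, ← mulVec_transpose]
      _ = 0 := by rw [h0, zero_dotProduct]
  have hpos := hA.dotProduct_mulVec_pos hRx
  simp only [star_trivial] at hpos ⊢
  have e1 : x ⬝ᵥ (R * A * Rᵀ) *ᵥ x = (Rᵀ *ᵥ x) ⬝ᵥ A *ᵥ (Rᵀ *ᵥ x) := by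
    rw [← mulVec_mulVec, ← mulVec_mulVec, dotProduct_mulVec, ← mulVec_transpose]
  rw [e1]
  exact hpos

/-- Key estimate: `A - A Rᵀ (R A Rᵀ)⁻¹ R A` is positive semidefinite. -/
lemma aux_key {k n : ℕ} (A : Matrix (Fin n) (Fin n) ℝ) (hA : A.PosDef)
    (R : Matrix (Fin k) (Fin n) ℝ) (hR : Function.Surjective R.mulVec) :
    (A - A * (Rᵀ * (R * A * Rᵀ)⁻¹ * R * A)).PosSemidef := by
  have hAt : Aᵀ = A := by
    rw [← conjTranspose_eq_transpose_of_trivial]; exact hA.isHermitian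
  have hB : (R * A * Rᵀ).PosDef := aux_posDef_RAR A hA R hR
  have : Invertible (R * A * Rᵀ) := hB.isUnit.invertible
  have hblock : (fromBlocks (R * A * Rᵀ) (R * A) (R * A)ᴴ A).PosSemidef := by
    have hE : fromRows R (1 : Matrix (Fin n) (Fin n) ℝ) * A *
        (fromRows R (1 : Matrix (Fin n) (Fin n) ℝ))ᴴ
        = fromBlocks (R * A * Rᵀ) (R * A) (R * A)ᴴ A := by
      rw [conjTranspose_fromRows_eq_fromCols_conjTranspose, fromRows_mul,
        fromRows_mul_fromCols]
      simp [conjTranspose_eq_transpose_of_trivial, transpose_mul, hAt, Matrix.mul_assoc]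
    rw [← hE]
    exact hA.posSemidef.mul_mul_conjTranspose_same _
  have hres := (Matrix.PosDef.fromBlocks₁₁ (R * A) A hB).mp hblock
  have heq : A - (R * A)ᴴ * (R * A * Rᵀ)⁻¹ * (R * A)
      = A - A * (Rᵀ * (R * A * Rᵀ)⁻¹ * R * A) := by
    congr 1
    simp [conjTranspose_eq_transpose_of_trivial, transpose_mul, hAt, Matrix.mul_assoc]
  rwa [heq] at hres

end aux

/-- For the additive Schwarz operator `P = Σ_{i=0}^N R_iᵀ (R_i A R_iᵀ)⁻¹ R_i A` with `A`
symmetric positive definite and full-row-rank `R_i`, every eigenvalue of `P` is at most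
`N + 1`. -/
theorem stmt7 (n N : ℕ) (A : Matrix (Fin n) (Fin n) ℝ) (hA : A.PosDef)
    (m : Fin (N + 1) → ℕ) (R : ∀ i, Matrix (Fin (m i)) (Fin n) ℝ)
    (hR : ∀ i, Function.Surjective (R i).mulVec)
    (P : Matrix (Fin n) (Fin n) ℝ)
    (hP : P = ∑ i, (R i)ᵀ * (R i * A * (R i)ᵀ)⁻¹ * R i * A) :
    ∀ (μ : ℝ) (v : Fin n → ℝ), v ≠ 0 → P.mulVec v = μ • v → μ ≤ (N : ℝ) + 1 := by
  intro μ v hv hev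
  set a : ℝ := v ⬝ᵥ A *ᵥ v with ha
  have hapos : 0 < a := by
    have := hA.dotProduct_mulVec_pos hv
    simpa using this
  have hterm : ∀ i : Fin (N + 1),
      v ⬝ᵥ (A * ((R i)ᵀ * (R i * A * (R i)ᵀ)⁻¹ * R i * A)) *ᵥ v ≤ a := by
    intro i
    have h2 := (aux_key A hA (R i) (hR i)).dotProduct_mulVec_nonneg v
    simp only [star_trivial, sub_mulVec, dotProduct_sub] at h2
    linarith
  have hAPsum : v ⬝ᵥ (A * P) *ᵥ v
      = ∑ i, v ⬝ᵥ (A * ((R i)ᵀ * (R i * A * (R i)ᵀ)⁻¹ * R i * A)) *ᵥ v := by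
    rw [hP, Finset.mul_sum, aux_sum_mulVec, aux_dotProduct_sum]
  have hsum : v ⬝ᵥ (A * P) *ᵥ v ≤ ((N : ℝ) + 1) * a := by
    rw [hAPsum]
    calc ∑ i, v ⬝ᵥ (A * ((R i)ᵀ * (R i * A * (R i)ᵀ)⁻¹ * R i * A)) *ᵥ v
        ≤ ∑ _i : Fin (N + 1), a := Finset.sum_le_sum fun i _ => hterm i
      _ = ((N : ℝ) + 1) * a := by
          rw [Finset.sum_const, Finset.card_univ, Fintype.card_fin, nsmul_eq_mul]
          push_cast
          ring
  have hlhs : v ⬝ᵥ (A * P) *ᵥ v = μ * a := by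
    rw [← mulVec_mulVec, hev, mulVec_smul, dotProduct_smul, smul_eq_mul, ha]
  rw [hlhs] at hsum
  exact le_of_mul_le_mul_right hsum hapos
end

section
/- If every vector v admits a decomposition v = Σ_{i=0}^N R_iᵀ v_i with Σ_i v_iᵀ (R_i A R_iᵀ) v_i ≤ C₀² vᵀ A v (a stable decomposition), then the smallest eigenvalue of the additive Schwarz operator P = Σ_i R_iᵀ(R_i A R_iᵀ)⁻¹R_i A satisfies λ_min(P) ≥ C₀⁻². -/
open Matrix

lemma sum_dotProduct' {ι k : Type*} [Fintype k] (s : Finset ι) (f : ι → k → ℝ) (z : k → ℝ) :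
    (∑ i ∈ s, f i) ⬝ᵥ z = ∑ i ∈ s, f i ⬝ᵥ z := by
  simp only [dotProduct, Finset.sum_apply, Finset.sum_mul]
  rw [Finset.sum_comm]

lemma dotProduct_sum' {ι k : Type*} [Fintype k] (s : Finset ι) (z : k → ℝ) (f : ι → k → ℝ) :
    z ⬝ᵥ (∑ i ∈ s, f i) = ∑ i ∈ s, z ⬝ᵥ f i := by
  simp only [dotProduct, Finset.sum_apply, Finset.mul_sum]
  rw [Finset.sum_comm]

lemma sum_mulVec' {ι p q : Type*} [Fintype q] (s : Finset ι)
    (M : ι → Matrix p q ℝ) (z : q → ℝ) :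
    (∑ i ∈ s, M i) *ᵥ z = ∑ i ∈ s, M i *ᵥ z := by
  ext j
  simp only [mulVec, dotProduct, Matrix.sum_apply, Finset.sum_apply, Finset.sum_mul]
  rw [Finset.sum_comm]

lemma posDef_RAR {n k : ℕ} (A : Matrix (Fin n) (Fin n) ℝ) (hA : A.PosDef)
    (R : Matrix (Fin k) (Fin n) ℝ) (hR : Function.Surjective R.mulVec) :
    (R * A * Rᵀ).PosDef := by
  rw [posDef_iff_dotProduct_mulVec]
  constructor
  · have hAe : Aᵀ = A := hA.1
    unfold Matrix.IsHermitian
    rw [conjTranspose_eq_transpose_of_trivial, transpose_mul, transpose_mul,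
      transpose_transpose, hAe, Matrix.mul_assoc]
  · intro x hx
    have hu : Rᵀ *ᵥ x ≠ 0 := by
      intro h
      apply hx
      have hz : ∀ z, x ⬝ᵥ R *ᵥ z = 0 := fun z => by
        rw [dotProduct_mulVec, ← mulVec_transpose, h, zero_dotProduct]
      obtain ⟨y, hy⟩ := hR x
      rw [← dotProduct_self_eq_zero (v := x)]
      calc x ⬝ᵥ x = x ⬝ᵥ (R *ᵥ y) := by rw [hy]
        _ = 0 := hz y
    have key : star x ⬝ᵥ (R * A * Rᵀ) *ᵥ x = star (Rᵀ *ᵥ x) ⬝ᵥ A *ᵥ (Rᵀ *ᵥ x) := by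
      rw [star_trivial, star_trivial, ← mulVec_mulVec, ← mulVec_mulVec,
        dotProduct_mulVec, ← mulVec_transpose]
    rw [key]
    exact hA.dotProduct_mulVec_pos hu

/-- Lions' lemma / abstract Schwarz lower bound: if every vector `v` admits a stable
decomposition `v = Σ_i R_iᵀ v_i` with `Σ_i v_iᵀ (R_i A R_iᵀ) v_i ≤ C₀² vᵀ A v`, then every
eigenvalue of the additive Schwarz operator `P = Σ_i R_iᵀ (R_i A R_iᵀ)⁻¹ R_i A` is at
least `C₀⁻²`. -/
theorem stmt9 (n N : ℕ) (A : Matrix (Fin n) (Fin n) ℝ) (hA : A.PosDef)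
    (m : Fin (N + 1) → ℕ) (R : ∀ i, Matrix (Fin (m i)) (Fin n) ℝ)
    (hR : ∀ i, Function.Surjective (R i).mulVec)
    (C0 : ℝ) (hC0 : 0 < C0)
    (hstable : ∀ v : Fin n → ℝ, ∃ w : ∀ i, Fin (m i) → ℝ,
      v = ∑ i, ((R i)ᵀ).mulVec (w i) ∧
      ∑ i, w i ⬝ᵥ (R i * A * (R i)ᵀ).mulVec (w i) ≤ C0 ^ 2 * (v ⬝ᵥ A.mulVec v))
    (P : Matrix (Fin n) (Fin n) ℝ)
    (hP : P = ∑ i, (R i)ᵀ * (R i * A * (R i)ᵀ)⁻¹ * R i * A) :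
    ∀ (μ : ℝ) (v : Fin n → ℝ), v ≠ 0 → P.mulVec v = μ • v → (C0 ^ 2)⁻¹ ≤ μ := by
  intro μ v hv hev
  set B : ∀ i : Fin (N + 1), Matrix (Fin (m i)) (Fin (m i)) ℝ :=
    fun i => R i * A * (R i)ᵀ with hBdef
  have hB : ∀ i, (B i).PosDef := fun i => posDef_RAR A hA (R i) (hR i)
  have hBinv : ∀ i, B i * (B i)⁻¹ = 1 := fun i =>
    mul_nonsing_inv _ ((Matrix.isUnit_iff_isUnit_det _).1 (hB i).isUnit)
  set a : ℝ := v ⬝ᵥ A *ᵥ v with hadef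
  have ha : 0 < a := by simpa using hA.dotProduct_mulVec_pos hv
  obtain ⟨w, hdec, hsum⟩ := hstable v
  set u : ∀ i : Fin (N + 1), Fin (m i) → ℝ := fun i => R i *ᵥ (A *ᵥ v) with hudef
  set x : ∀ i : Fin (N + 1), Fin (m i) → ℝ := fun i => (B i)⁻¹ *ᵥ u i with hxdef
  have hBx : ∀ i, B i *ᵥ x i = u i := by
    intro i
    rw [hxdef, mulVec_mulVec, hBinv, one_mulVec]
  -- Fact 2 : Σ wᵢ ⬝ uᵢ = a
  have fact2 : ∑ i, w i ⬝ᵥ u i = a := by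
    have : ∀ i, w i ⬝ᵥ u i = ((R i)ᵀ *ᵥ w i) ⬝ᵥ (A *ᵥ v) := by
      intro i
      rw [hudef, dotProduct_mulVec, ← mulVec_transpose]
    simp_rw [this]
    rw [← sum_dotProduct', ← hdec]
  -- Fact 3 : Σ xᵢ ⬝ uᵢ = μ * a
  have hPv : P *ᵥ v = ∑ i, (R i)ᵀ *ᵥ x i := by
    rw [hP, sum_mulVec']
    refine Finset.sum_congr rfl fun i _ => ?_
    rw [hxdef, hudef, hBdef]
    rw [← mulVec_mulVec, ← mulVec_mulVec, ← mulVec_mulVec]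
  have fact3 : ∑ i, x i ⬝ᵥ u i = μ * a := by
    have h1 : (A *ᵥ v) ⬝ᵥ (P *ᵥ v) = ∑ i, x i ⬝ᵥ u i := by
      rw [hPv, dotProduct_sum']
      refine Finset.sum_congr rfl fun i _ => ?_
      rw [dotProduct_mulVec, vecMul_transpose]
      exact dotProduct_comm _ _
    rw [← h1, hev, dotProduct_smul, smul_eq_mul, dotProduct_comm, ← hadef]
  -- Fact 4 : per-subdomain nonnegativity with t = C0^2
  have fact4 : ∀ i, 0 ≤ w i ⬝ᵥ B i *ᵥ w i - 2 * C0 ^ 2 * (w i ⬝ᵥ u i)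
      + C0 ^ 2 * C0 ^ 2 * (x i ⬝ᵥ u i) := by
    intro i
    have h0 : 0 ≤ (w i - C0 ^ 2 • x i) ⬝ᵥ B i *ᵥ (w i - C0 ^ 2 • x i) := by
      simpa using (hB i).posSemidef.dotProduct_mulVec_nonneg (w i - C0 ^ 2 • x i)
    have hxBw : x i ⬝ᵥ B i *ᵥ w i = w i ⬝ᵥ u i := by
      rw [dotProduct_mulVec]
      have hBs : (B i)ᵀ = B i := (hB i).1
      rw [← hBs, vecMul_transpose, hBx, dotProduct_comm]
    have hwBx : w i ⬝ᵥ B i *ᵥ x i = w i ⬝ᵥ u i := by rw [hBx]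
    have hxBx : x i ⬝ᵥ B i *ᵥ x i = x i ⬝ᵥ u i := by rw [hBx]
    calc (0:ℝ) ≤ (w i - C0 ^ 2 • x i) ⬝ᵥ B i *ᵥ (w i - C0 ^ 2 • x i) := h0
      _ = w i ⬝ᵥ B i *ᵥ w i - 2 * C0 ^ 2 * (w i ⬝ᵥ u i)
          + C0 ^ 2 * C0 ^ 2 * (x i ⬝ᵥ u i) := by
        rw [sub_dotProduct, mulVec_sub, dotProduct_sub, dotProduct_sub,
          mulVec_smul, dotProduct_smul, dotProduct_smul, smul_dotProduct,
          smul_dotProduct, hxBw, hwBx, hxBx]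
        simp only [smul_eq_mul]
        ring
  have hfin : 0 ≤ ∑ i, w i ⬝ᵥ B i *ᵥ w i - 2 * C0 ^ 2 * a + C0 ^ 2 * C0 ^ 2 * (μ * a) := by
    have := Finset.sum_nonneg (fun i (_ : i ∈ Finset.univ) => fact4 i)
    rw [Finset.sum_add_distrib, Finset.sum_sub_distrib, ← Finset.mul_sum, ← Finset.mul_sum,
      fact2, fact3] at this
    linarith
  have hsum' : ∑ i, w i ⬝ᵥ B i *ᵥ w i ≤ C0 ^ 2 * a := hsum
  rw [inv_le_iff_one_le_mul₀ (by positivity)]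
  nlinarith [sq_nonneg C0, mul_pos ha (pow_pos hC0 2)]
end
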